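/- Let μ ∈ P₂(X), g = P_μ ∇log(μ/π), and for t ≥ 0 define φ_t = I - t g. Assume ‖k(x,·)‖_{H₀} ≤ B, ‖∇_x k(x,·)‖_H ≤ B, and I_Stein(μ|π) ≤ C. Then for all x ∈ X, ‖t Jg(x)‖_op ≤ t B √C, and for every t < 1/(B√C) the map φ_t is a diffeomorphism of X. Moreover, if α > 1 and t ≤ (α-1)/(α B C^{1/2}), then ‖(Jφ_t(x))^{-1}‖_op ≤ α for every x. -/

import Mathlib

open MeasureTheory
open scoped RealInnerProductSpace

/-- **`φ_t = I - t g` is a diffeomorphism for small `t`, with controlled inverse Jacobian.**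

`X = ℝ^d`, `μ ∈ P₂(X)`, `g = P_μ ∇log(μ/π)`, `φ_t = I - t g`.  The RKHS `H₀` of `k` is
modelled via a feature map `φ` with `k x y = ⟪φ x, φ y⟫` and derivative feature map
`Dφ`; `gH = S_μ∇log(μ/π)` and `g` agrees with it pointwise (reproducing property);
`Jg` is the Jacobian of `g`.  Assumptions: `‖k(x,·)‖_{H₀} ≤ B`, `‖∇ₓk(x,·)‖_H ≤ B`,
and `I_Stein(μ|π) = ‖gH‖²_H ≤ C`.  Conclusions:
(1) `‖t Jg(x)‖_op ≤ t B √C` for all `t ≥ 0` and `x`;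
(2) for `0 ≤ t < 1/(B√C)` the map `φ_t` is a diffeomorphism (a bijection of `ℝ^d` with
    differentiable inverse);
(3) if `α > 1` and `t ≤ (α-1)/(αB√C)` then `Jφ_t(x) = I - t Jg(x)` is invertible with
    `‖(Jφ_t(x))⁻¹‖_op ≤ α` for every `x`. -/
theorem svgd_phase_map_diffeomorphism {d : ℕ}
    {H₀ : Type*} [NormedAddCommGroup H₀] [InnerProductSpace ℝ H₀] [CompleteSpace H₀]
    (k : EuclideanSpace ℝ (Fin d) → EuclideanSpace ℝ (Fin d) → ℝ)
    (φ : EuclideanSpace ℝ (Fin d) → H₀)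
    (Dφ : EuclideanSpace ℝ (Fin d) → EuclideanSpace ℝ (Fin d) →L[ℝ] H₀)
    (hk : ∀ x y, k x y = ⟪φ x, φ y⟫)
    (hφdiff : ∀ x, HasFDerivAt φ (Dφ x) x)
    (B : ℝ) (hB : 0 < B)
    (hkB : ∀ x, ‖φ x‖ ≤ B)
    (hdkB : ∀ x, Real.sqrt (∑ i, ‖Dφ x (EuclideanSpace.single i 1)‖ ^ 2) ≤ B)
    (μ : Measure (EuclideanSpace ℝ (Fin d))) [IsProbabilityMeasure μ]
    (dlog : EuclideanSpace ℝ (Fin d) → EuclideanSpace ℝ (Fin d))     -- ∇log(μ/π)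
    (gH : Fin d → H₀)                                                 -- S_μ ∇log(μ/π)
    (hgH : ∀ i, gH i = ∫ x, dlog x i • φ x ∂μ)
    (g : EuclideanSpace ℝ (Fin d) → EuclideanSpace ℝ (Fin d))        -- P_μ ∇log(μ/π)
    (hg : ∀ x i, g x i = ⟪gH i, φ x⟫)
    (Jg : EuclideanSpace ℝ (Fin d) →
      EuclideanSpace ℝ (Fin d) →L[ℝ] EuclideanSpace ℝ (Fin d))       -- Jacobian of g
    (hJg : ∀ x, HasFDerivAt g (Jg x) x)
    (C : ℝ) (hC : 0 < C)
    (hIC : (∑ i, ‖gH i‖ ^ 2) ≤ C) :                                   -- I_Stein(μ|π) ≤ C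
    (∀ t : ℝ, 0 ≤ t → ∀ x, ‖t • Jg x‖ ≤ t * (B * Real.sqrt C)) ∧
    (∀ t : ℝ, 0 ≤ t → t < 1 / (B * Real.sqrt C) →
      Function.Bijective (fun x => x - t • g x) ∧
      Differentiable ℝ (Function.invFun (fun x => x - t • g x))) ∧
    (∀ α : ℝ, 1 < α → ∀ t : ℝ, 0 ≤ t → t ≤ (α - 1) / (α * B * Real.sqrt C) → ∀ x,
      IsUnit (ContinuousLinearMap.id ℝ (EuclideanSpace ℝ (Fin d)) - t • Jg x) ∧
      ‖Ring.inverse (ContinuousLinearMap.id ℝ (EuclideanSpace ℝ (Fin d)) - t • Jg x)‖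
        ≤ α) := by
  have hsC : 0 < Real.sqrt C := Real.sqrt_pos.mpr hC
  set K : ℝ := B * Real.sqrt C with hKdef
  have hKpos : 0 < K := mul_pos hB hsC
  -- the continuous linear map `h ↦ (⟪gH i, h⟫)_i`
  let M : H₀ →L[ℝ] EuclideanSpace ℝ (Fin d) :=
    (PiLp.continuousLinearEquiv 2 ℝ (fun _ : Fin d => ℝ)).symm.toContinuousLinearMap.comp
      (ContinuousLinearMap.pi (fun i => innerSL ℝ (gH i)))
  have hMapp : ∀ (h : H₀) (i : Fin d), M h i = ⟪gH i, h⟫ := fun h i => rfl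
  have hgM : g = fun x => M (φ x) := by
    funext x
    ext i
    rw [hg, hMapp]
  have hMnorm : ∀ h : H₀, ‖M h‖ ≤ Real.sqrt C * ‖h‖ := by
    intro h
    rw [EuclideanSpace.norm_eq]
    have hle : (∑ i, ‖M h i‖ ^ 2) ≤ C * ‖h‖ ^ 2 := by
      calc (∑ i, ‖M h i‖ ^ 2) ≤ ∑ i, ‖gH i‖ ^ 2 * ‖h‖ ^ 2 := by
            refine Finset.sum_le_sum fun i _ => ?_
            rw [hMapp]
            have h1 : |(⟪gH i, h⟫ : ℝ)| ≤ ‖gH i‖ * ‖h‖ := abs_real_inner_le_norm _ _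
            calc ‖(⟪gH i, h⟫ : ℝ)‖ ^ 2 = |(⟪gH i, h⟫ : ℝ)| ^ 2 := by rw [Real.norm_eq_abs]
              _ ≤ (‖gH i‖ * ‖h‖) ^ 2 := by
                  refine pow_le_pow_left₀ (abs_nonneg _) h1 2
              _ = ‖gH i‖ ^ 2 * ‖h‖ ^ 2 := by ring
        _ = (∑ i, ‖gH i‖ ^ 2) * ‖h‖ ^ 2 := by rw [Finset.sum_mul]
        _ ≤ C * ‖h‖ ^ 2 := by
            exact mul_le_mul_of_nonneg_right hIC (sq_nonneg _)
    calc Real.sqrt (∑ i, ‖M h i‖ ^ 2) ≤ Real.sqrt (C * ‖h‖ ^ 2) := Real.sqrt_le_sqrt hle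
      _ = Real.sqrt C * ‖h‖ := by
          rw [Real.sqrt_mul hC.le, Real.sqrt_sq (norm_nonneg h)]
  -- bound on ‖Dφ x‖
  have hDφ : ∀ x, ‖Dφ x‖ ≤ B := by
    intro x
    refine ContinuousLinearMap.opNorm_le_bound _ hB.le fun v => ?_
    have hv : v = ∑ i, v i • EuclideanSpace.single i (1 : ℝ) := by
      ext j
      have hsa : (∑ i : Fin d, v i • EuclideanSpace.single i (1:ℝ)) j
          = ∑ i : Fin d, (v i • EuclideanSpace.single i (1:ℝ)) j :=
        by rw [WithLp.ofLp_sum]; exact Finset.sum_apply j Finset.univ _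
      rw [hsa]
      simp [EuclideanSpace.single_apply]
    have hvnorm : Real.sqrt (∑ i, (v i) ^ 2) = ‖v‖ := by
      rw [EuclideanSpace.norm_eq]
      congr 1
      exact Finset.sum_congr rfl fun i _ => by rw [Real.norm_eq_abs, sq_abs]
    calc ‖Dφ x v‖ = ‖∑ i, v i • Dφ x (EuclideanSpace.single i 1)‖ := by
          conv_lhs => rw [hv]
          rw [map_sum]
          simp_rw [_root_.map_smul]
      _ ≤ ∑ i, ‖v i • Dφ x (EuclideanSpace.single i 1)‖ := norm_sum_le _ _
      _ = ∑ i, |v i| * ‖Dφ x (EuclideanSpace.single i 1)‖ := by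
          refine Finset.sum_congr rfl fun i _ => ?_
          rw [norm_smul, Real.norm_eq_abs]
      _ ≤ Real.sqrt (∑ i, (v i) ^ 2) * Real.sqrt (∑ i, ‖Dφ x (EuclideanSpace.single i 1)‖ ^ 2) := by
          have hcs := Finset.sum_mul_sq_le_sq_mul_sq Finset.univ
            (fun i => |v i|) (fun i => ‖Dφ x (EuclideanSpace.single i 1)‖)
          have hnn : (0:ℝ) ≤ ∑ i, |v i| * ‖Dφ x (EuclideanSpace.single i 1)‖ :=
            Finset.sum_nonneg fun i _ => mul_nonneg (abs_nonneg _) (norm_nonneg _)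
          have h2 : (∑ i, |v i| * ‖Dφ x (EuclideanSpace.single i 1)‖) ^ 2 ≤
              (∑ i, (v i) ^ 2) * (∑ i, ‖Dφ x (EuclideanSpace.single i 1)‖ ^ 2) := by
            simpa [sq_abs] using hcs
          calc (∑ i, |v i| * ‖Dφ x (EuclideanSpace.single i 1)‖)
              = Real.sqrt ((∑ i, |v i| * ‖Dφ x (EuclideanSpace.single i 1)‖) ^ 2) :=
                (Real.sqrt_sq hnn).symm
            _ ≤ Real.sqrt ((∑ i, (v i) ^ 2) * (∑ i, ‖Dφ x (EuclideanSpace.single i 1)‖ ^ 2)) :=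
                Real.sqrt_le_sqrt h2
            _ = _ := Real.sqrt_mul (Finset.sum_nonneg fun i _ => sq_nonneg _) _
      _ ≤ ‖v‖ * B := by
          rw [hvnorm]
          exact mul_le_mul_of_nonneg_left (hdkB x) (norm_nonneg v)
      _ = B * ‖v‖ := mul_comm _ _
  -- Jacobian bound
  have hJgbound : ∀ x, ‖Jg x‖ ≤ K := by
    intro x
    have hgd : HasFDerivAt g (M.comp (Dφ x)) x := by
      rw [hgM]
      exact (M.hasFDerivAt).comp x (hφdiff x)
    have heq : Jg x = M.comp (Dφ x) := (hJg x).unique hgd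
    rw [heq]
    refine ContinuousLinearMap.opNorm_le_bound _ hKpos.le fun v => ?_
    calc ‖M (Dφ x v)‖ ≤ Real.sqrt C * ‖Dφ x v‖ := hMnorm _
      _ ≤ Real.sqrt C * (B * ‖v‖) := by
          refine mul_le_mul_of_nonneg_left ?_ hsC.le
          exact (Dφ x).le_of_opNorm_le (hDφ x) v
      _ = K * ‖v‖ := by rw [hKdef]; ring
  -- Part 1
  have part1 : ∀ t : ℝ, 0 ≤ t → ∀ x, ‖t • Jg x‖ ≤ t * K := by
    intro t ht x
    rw [norm_smul t (Jg x), Real.norm_eq_abs, abs_of_nonneg ht]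
    exact mul_le_mul_of_nonneg_left (hJgbound x) ht
  -- Lipschitz estimate for g
  have hdist : ∀ x y : EuclideanSpace ℝ (Fin d), ‖g y - g x‖ ≤ K * ‖y - x‖ := by
    intro x y
    exact convex_univ.norm_image_sub_le_of_norm_hasFDerivWithin_le
      (fun z _ => (hJg z).hasFDerivWithinAt) (fun z _ => hJgbound z)
      (Set.mem_univ x) (Set.mem_univ y)
  refine ⟨part1, ?_, ?_⟩
  · -- Part 2
    intro t ht htlt
    have hc0 : 0 ≤ t * K := mul_nonneg ht hKpos.le
    have hc1 : t * K < 1 := by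
      have h := mul_lt_mul_of_pos_right htlt hKpos
      rwa [one_div, inv_mul_cancel₀ hKpos.ne'] at h
    have h1c : 0 < 1 - t * K := by linarith
    have hkey : ∀ x y : EuclideanSpace ℝ (Fin d),
        (1 - t * K) * ‖x - y‖ ≤ ‖(x - t • g x) - (y - t • g y)‖ := by
      intro x y
      have h1 : ‖t • g x - t • g y‖ ≤ t * K * ‖x - y‖ := by
        rw [← smul_sub, norm_smul t (g x - g y), Real.norm_eq_abs, abs_of_nonneg ht]
        calc t * ‖g x - g y‖ ≤ t * (K * ‖x - y‖) :=
              mul_le_mul_of_nonneg_left (hdist y x) ht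
          _ = t * K * ‖x - y‖ := by ring
      have h2 : ‖x - y‖ ≤ ‖(x - t • g x) - (y - t • g y)‖ + ‖t • g x - t • g y‖ := by
        have heq : x - y = ((x - t • g x) - (y - t • g y)) + (t • g x - t • g y) := by abel
        rw [heq]
        exact norm_add_le _ _
      rw [sub_mul, one_mul]
      linarith
    have hinj : Function.Injective (fun x : EuclideanSpace ℝ (Fin d) => x - t • g x) := by
      intro x y hxy
      simp only at hxy
      have h := hkey x y
      rw [hxy, sub_self, norm_zero] at h
      have h0 : ‖x - y‖ ≤ 0 := by
        by_contra hcon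
        push_neg at hcon
        nlinarith
      have : x - y = 0 := norm_le_zero_iff.mp h0
      exact sub_eq_zero.mp this
    have hsurj : Function.Surjective (fun x : EuclideanSpace ℝ (Fin d) => x - t • g x) := by
      intro y
      set F := fun x : EuclideanSpace ℝ (Fin d) => y + t • g x with hF
      have hlipF : LipschitzWith (t * K).toNNReal F := by
        refine LipschitzWith.of_dist_le_mul fun x x' => ?_
        rw [dist_eq_norm, dist_eq_norm, Real.coe_toNNReal _ hc0]
        have heq : F x - F x' = t • g x - t • g x' := by simp [hF]
        rw [heq, ← smul_sub, norm_smul t (g x - g x'), Real.norm_eq_abs, abs_of_nonneg ht]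
        calc t * ‖g x - g x'‖ ≤ t * (K * ‖x - x'‖) :=
              mul_le_mul_of_nonneg_left (hdist x' x) ht
          _ = t * K * ‖x - x'‖ := by ring
      have hcontr : ContractingWith (t * K).toNNReal F := by
        refine ⟨?_, hlipF⟩
        have : ((t * K).toNNReal : ℝ) < 1 := by rwa [Real.coe_toNNReal _ hc0]
        exact_mod_cast this
      refine ⟨ContractingWith.fixedPoint F hcontr, ?_⟩
      have hfix : F (ContractingWith.fixedPoint F hcontr) = ContractingWith.fixedPoint F hcontr :=
        hcontr.fixedPoint_isFixedPt
      simp only [hF] at hfix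
      simp only
      exact (eq_sub_of_add_eq hfix).symm
    refine ⟨⟨hinj, hsurj⟩, ?_⟩
    set h := Function.invFun (fun x : EuclideanSpace ℝ (Fin d) => x - t • g x) with hhdef
    have hri : ∀ y, (h y) - t • g (h y) = y := fun y =>
      Function.rightInverse_invFun hsurj y
    have hlip : LipschitzWith ((1 - t * K)⁻¹).toNNReal h := by
      refine LipschitzWith.of_dist_le_mul fun y1 y2 => ?_
      rw [dist_eq_norm, dist_eq_norm, Real.coe_toNNReal _ (by positivity)]
      have hk2 := hkey (h y1) (h y2)
      rw [hri y1, hri y2] at hk2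
      calc ‖h y1 - h y2‖ = (1 - t * K)⁻¹ * ((1 - t * K) * ‖h y1 - h y2‖) := by
            field_simp
        _ ≤ (1 - t * K)⁻¹ * ‖y1 - y2‖ :=
            mul_le_mul_of_nonneg_left hk2 (by positivity)
    intro a
    have hL : ‖t • Jg (h a)‖ < 1 := lt_of_le_of_lt (part1 t ht (h a)) hc1
    let u : (EuclideanSpace ℝ (Fin d) →L[ℝ] EuclideanSpace ℝ (Fin d))ˣ :=
      Units.oneSub (t • Jg (h a)) hL
    let e := ContinuousLinearEquiv.unitsEquiv ℝ (EuclideanSpace ℝ (Fin d)) u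
    have hder : HasFDerivAt (fun x : EuclideanSpace ℝ (Fin d) => x - t • g x)
        (e : EuclideanSpace ℝ (Fin d) →L[ℝ] EuclideanSpace ℝ (Fin d)) (h a) := by
      have hcoe : (e : EuclideanSpace ℝ (Fin d) →L[ℝ] EuclideanSpace ℝ (Fin d)) =
          1 - t • Jg (h a) := rfl
      rw [hcoe, ContinuousLinearMap.one_def]
      exact (hasFDerivAt_id (h a)).sub ((hJg (h a)).const_smul t)
    have hda : HasFDerivAt h
        (e.symm : EuclideanSpace ℝ (Fin d) →L[ℝ] EuclideanSpace ℝ (Fin d)) a :=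
      HasFDerivAt.of_local_left_inverse (hlip.continuous.continuousAt) hder
        (Filter.Eventually.of_forall hri)
    exact hda.differentiableAt
  · -- Part 3
    intro α hα t ht htle x
    have hαpos : 0 < α := by linarith
    have htK : t * K ≤ (α - 1) / α := by
      have heq : (α - 1) / (α * B * Real.sqrt C) * K = (α - 1) / α := by
        rw [hKdef]
        field_simp
      calc t * K ≤ (α - 1) / (α * B * Real.sqrt C) * K :=
            mul_le_mul_of_nonneg_right htle hKpos.le
        _ = (α - 1) / α := heq
    have hLle : ‖t • Jg x‖ ≤ (α - 1) / α := (part1 t ht x).trans htK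
    have hfrac : (α - 1) / α < 1 := by
      rw [div_lt_one hαpos]
      linarith
    have hlt1 : ‖t • Jg x‖ < 1 := lt_of_le_of_lt hLle hfrac
    rw [← ContinuousLinearMap.one_def]
    refine ⟨isUnit_one_sub_of_norm_lt_one hlt1, ?_⟩
    rw [← geom_series_eq_inverse _ hlt1]
    have hb := tsum_geometric_le_of_norm_lt_one (t • Jg x) hlt1
    have h1n : ‖(1 : EuclideanSpace ℝ (Fin d) →L[ℝ] EuclideanSpace ℝ (Fin d))‖ ≤ 1 := by
      rw [ContinuousLinearMap.one_def]
      exact ContinuousLinearMap.norm_id_le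
    have h2 : (1 - ‖t • Jg x‖)⁻¹ ≤ α := by
      have hge : 1 / α ≤ 1 - ‖t • Jg x‖ := by
        have : (α - 1) / α = 1 - 1 / α := by field_simp
        rw [this] at hLle
        linarith
      calc (1 - ‖t • Jg x‖)⁻¹ ≤ (1 / α)⁻¹ := by
            exact inv_anti₀ (by positivity) hge
        _ = α := by rw [one_div, inv_inv]
    linarith
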